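/- Consider the dataset 𝒳₃² with a symmetric mixing probability measure μ on ℝ supported in [0,1]. Let ε ∈ (0, 1/3] and suppose μ((1/2 − ε/2, 1/2 + ε/2)) > 3/4. Then the Mixup-optimal local classifier at the point 1 (whose true class is 2) favors class 1: h_ε^1(1) > 1/2, so h_ε does not achieve zero classification error on 𝒳₃². -/

import Mathlib

open MeasureTheory

noncomputable section

variable {E : Type*} [NormedAddCommGroup E] [NormedSpace ℝ E]

/-- The set of mixing coefficients `λ ∈ [0,1]` for which the mixed point
`λ • s + (1 - λ) • t` lies within distance `ε` of `x`. -/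
def mixSet (s t x : E) (ε : ℝ) : Set ℝ :=
  {l : ℝ | l ∈ Set.Icc (0 : ℝ) 1 ∧ ‖l • s + (1 - l) • t - x‖ < ε}

/-- `ξ^{i,j}_{x,ε}`: the (normalized) measure of pairs and coefficients mixing
a point of `Xi` with a point of `Xj` into the `ε`-ball around `x`. -/
def xiMeas (μ : Measure ℝ) (N : ℕ) (Xi Xj : Finset E) (x : E) (ε : ℝ) : ℝ :=
  (1 / (N : ℝ) ^ 2) * ∑ s ∈ Xi, ∑ t ∈ Xj, (μ (mixSet s t x ε)).toReal

/-- `ξ^{i,j}_{x,ε,λ}`: the corresponding expectation of `λ`. -/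
def xiLam (μ : Measure ℝ) (N : ℕ) (Xi Xj : Finset E) (x : E) (ε : ℝ) : ℝ :=
  (1 / (N : ℝ) ^ 2) * ∑ s ∈ Xi, ∑ t ∈ Xj, ∫ l in mixSet s t x ε, l ∂μ

/-- Numerator of the Mixup-optimal local classifier value `h_ε^i(x)`. -/
def hNum {k : ℕ} (μ : Measure ℝ) (N : ℕ) (X : Fin k → Finset E) (i : Fin k)
    (x : E) (ε : ℝ) : ℝ :=
  xiMeas μ N (X i) (X i) x ε +
    ∑ j ∈ Finset.univ.filter (fun j => j ≠ i),
      (xiLam μ N (X i) (X j) x ε +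
        (xiMeas μ N (X j) (X i) x ε - xiLam μ N (X j) (X i) x ε))

/-- Denominator of the Mixup-optimal local classifier value. -/
def hDen {k : ℕ} (μ : Measure ℝ) (N : ℕ) (X : Fin k → Finset E) (x : E) (ε : ℝ) : ℝ :=
  ∑ q : Fin k, hNum μ N X q x ε

/-- The Mixup-optimal local classifier value `h_ε^i(x)`. -/
def hEps {k : ℕ} (μ : Measure ℝ) (N : ℕ) (X : Fin k → Finset E) (i : Fin k)
    (x : E) (ε : ℝ) : ℝ :=
  hNum μ N X i x ε / hDen μ N X x ε

end

/-- On the 3-point alternating line dataset `𝒳₃²` (`X₁ = {0,2}`, `X₂ = {1}` in `ℝ`),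
a symmetric mixing measure concentrating more than `3/4` of its mass near `1/2`
makes the Mixup-optimal local classifier at the point `1` favor class 1. -/
theorem mixup_fails_on_X32_concentrated
    (μ : MeasureTheory.Measure ℝ) [MeasureTheory.IsProbabilityMeasure μ]
    (hsupp : μ (Set.Icc (0 : ℝ) 1)ᶜ = 0)
    (hsym : μ.map (fun l => 1 - l) = μ)
    (ε : ℝ) (hε : ε ∈ Set.Ioc (0 : ℝ) (1 / 3))
    (hconc : 3 / 4 < μ (Set.Ioo (1 / 2 - ε / 2) (1 / 2 + ε / 2))) :
    1 / 2 < hEps μ 3 ![({0, 2} : Finset ℝ), ({1} : Finset ℝ)] 0 (1 : ℝ) ε := by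
  obtain ⟨he1, he2⟩ := hε
  -- the nine mixSets
  have hms : mixSet (0:ℝ) 0 1 ε = ∅ ∧ mixSet (2:ℝ) 2 1 ε = ∅ ∧
      mixSet (0:ℝ) 2 1 ε = Set.Ioo (1/2 - ε/2) (1/2 + ε/2) ∧
      mixSet (2:ℝ) 0 1 ε = Set.Ioo (1/2 - ε/2) (1/2 + ε/2) ∧
      mixSet (0:ℝ) 1 1 ε = Set.Ico 0 ε ∧
      mixSet (2:ℝ) 1 1 ε = Set.Ico 0 ε ∧
      mixSet (1:ℝ) 0 1 ε = Set.Ioc (1-ε) 1 ∧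
      mixSet (1:ℝ) 2 1 ε = Set.Ioc (1-ε) 1 ∧
      mixSet (1:ℝ) 1 1 ε = Set.Icc 0 1 := by
    refine ⟨?_, ?_, ?_, ?_, ?_, ?_, ?_, ?_, ?_⟩ <;>
    · ext l
      simp only [mixSet, Set.mem_setOf_eq, Set.mem_Icc, smul_eq_mul, Real.norm_eq_abs, abs_lt,
        Set.mem_Ioo, Set.mem_Ico, Set.mem_Ioc, Set.mem_empty_iff_false, iff_false]
      first
        | (rintro ⟨⟨h1, h2⟩, h3, h4⟩; linarith)
        | (constructor
           · rintro ⟨⟨h1, h2⟩, h3, h4⟩; constructor <;> linarith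
           · rintro ⟨h1, h2⟩; refine ⟨⟨by linarith, by linarith⟩, by linarith, by linarith⟩)
  obtain ⟨h00, h22, h02, h20, h01, h21, h10, h12, h11⟩ := hms
  -- measure of Icc 0 1 is 1
  have hIcc : μ (Set.Icc (0:ℝ) 1) = 1 := by
    have h := measure_add_measure_compl (μ := μ) (measurableSet_Icc (a := (0:ℝ)) (b := 1))
    rw [hsupp, add_zero, measure_univ] at h
    exact h
  -- symmetry: B = C
  have hBC : μ (Set.Ico (0:ℝ) ε) = μ (Set.Ioc (1-ε) 1) := by
    conv_rhs => rw [← hsym,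
      Measure.map_apply (show Measurable fun l : ℝ => 1 - l by fun_prop) measurableSet_Ioc]
    congr 1
    ext l
    simp only [Set.mem_preimage, Set.mem_Ioc, Set.mem_Ico]
    constructor
    · rintro ⟨h1, h2⟩; constructor <;> linarith
    · rintro ⟨h1, h2⟩; constructor <;> linarith
  -- disjoint union bound
  have hsum : μ (Set.Ioo (1/2 - ε/2) (1/2 + ε/2)) + μ (Set.Ico (0:ℝ) ε)
      + μ (Set.Ioc (1-ε) 1) ≤ 1 := by
    have d12 : Disjoint (Set.Ioo (1/2 - ε/2) (1/2 + ε/2)) (Set.Ico (0:ℝ) ε) := by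
      apply Set.disjoint_left.mpr
      rintro a ⟨h1, h2⟩ ⟨h3, h4⟩; linarith
    have d3 : Disjoint (Set.Ioo (1/2 - ε/2) (1/2 + ε/2) ∪ Set.Ico (0:ℝ) ε)
        (Set.Ioc (1-ε) 1) := by
      apply Set.disjoint_left.mpr
      rintro a (⟨h1, h2⟩ | ⟨h1, h2⟩) ⟨h3, h4⟩ <;> linarith
    rw [← measure_union d12 measurableSet_Ico, ← measure_union d3 measurableSet_Ioc]
    rw [← measure_univ (μ := μ)]
    exact measure_mono (Set.subset_univ _)
  -- real-valued abbreviations and facts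
  set A := (μ (Set.Ioo (1/2 - ε/2) (1/2 + ε/2))).toReal with hAdef
  set B := (μ (Set.Ico (0:ℝ) ε)).toReal with hBdef
  set C := (μ (Set.Ioc (1-ε) 1)).toReal with hCdef
  have hA : 3/4 < A := by
    have := ENNReal.toReal_strict_mono (measure_ne_top μ _) hconc
    rw [hAdef]
    refine lt_of_le_of_lt (le_of_eq ?_) this
    simp [ENNReal.toReal_div]
  have hBC' : B = C := by rw [hBdef, hCdef, hBC]
  have hsum' : A + B + C ≤ 1 := by
    have hne : μ (Set.Ioo (1/2 - ε/2) (1/2 + ε/2)) + μ (Set.Ico (0:ℝ) ε)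
        + μ (Set.Ioc (1-ε) 1) ≠ ⊤ := by
      exact ne_of_lt (lt_of_le_of_lt hsum (by norm_num))
    have := ENNReal.toReal_mono (by norm_num) hsum
    rwa [ENNReal.toReal_add (by finiteness) (by finiteness),
      ENNReal.toReal_add (by finiteness) (by finiteness), ENNReal.toReal_one] at this
  have hIcc' : (μ (Set.Icc (0:ℝ) 1)).toReal = 1 := by rw [hIcc, ENNReal.toReal_one]
  -- integrals
  have hint1 : IntegrableOn (fun l : ℝ => l) (Set.Ico 0 ε) μ := by
    apply Integrable.mono' (integrable_const (1:ℝ)) aestronglyMeasurable_id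
    filter_upwards [ae_restrict_mem measurableSet_Ico] with x hx
    simp only [id, Real.norm_eq_abs]; rw [abs_of_nonneg hx.1]; linarith [hx.2]
  have hint2 : IntegrableOn (fun l : ℝ => l) (Set.Ioc (1-ε) 1) μ := by
    apply Integrable.mono' (integrable_const (1:ℝ)) aestronglyMeasurable_id
    filter_upwards [ae_restrict_mem measurableSet_Ioc] with x hx
    simp only [id, Real.norm_eq_abs]; rw [abs_of_nonneg (by linarith [hx.1] : (0:ℝ) ≤ x)]
    exact hx.2
  have hI1nn : 0 ≤ ∫ l in Set.Ico (0:ℝ) ε, l ∂μ :=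
    setIntegral_nonneg measurableSet_Ico fun x hx => hx.1
  have hI2nn : 0 ≤ ∫ l in Set.Ioc (1-ε) 1, l ∂μ :=
    setIntegral_nonneg measurableSet_Ioc fun x hx => by linarith [hx.1]
  have hI1le : ∫ l in Set.Ico (0:ℝ) ε, l ∂μ ≤ B := by
    have := setIntegral_mono_on hint1 ((integrableOn_const_iff).mpr (Or.inr (measure_lt_top μ _)))
      measurableSet_Ico (fun x hx => by linarith [hx.2] : ∀ x ∈ Set.Ico (0:ℝ) ε, x ≤ 1)
    simpa [hBdef, measureReal_def] using this
  have hI2le : ∫ l in Set.Ioc (1-ε) 1, l ∂μ ≤ C := by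
    have := setIntegral_mono_on hint2 ((integrableOn_const_iff).mpr (Or.inr (measure_lt_top μ _)))
      measurableSet_Ioc (fun x hx => hx.2 : ∀ x ∈ Set.Ioc (1-ε) 1, x ≤ 1)
    simpa [hCdef, measureReal_def] using this
  -- now unfold the classifier
  have key : ∀ a b : ℝ, 0 < b → b < a → 1/2 < a / (a + b) := by
    intro a b hb hba
    rw [lt_div_iff₀ (by linarith)]
    linarith
  have hfilt0 : (Finset.univ.filter (fun j => j ≠ (0 : Fin 2))) = ({1} : Finset (Fin 2)) := by
    decide
  have hfilt1 : (Finset.univ.filter (fun j => j ≠ (1 : Fin 2))) = ({0} : Finset (Fin 2)) := by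
    decide
  simp only [hEps, hDen, hNum, xiMeas, xiLam, Fin.sum_univ_two, hfilt0, hfilt1,
    Finset.sum_singleton, Matrix.cons_val_zero, Matrix.cons_val_one, Matrix.head_cons,
    Finset.sum_insert (by norm_num : (0:ℝ) ∉ ({2} : Finset ℝ))]
  rw [h00, h22, h02, h20, h01, h21, h10, h12, h11]
  apply key
  · simp only [measure_empty, ENNReal.toReal_zero, Measure.restrict_empty,
      integral_zero_measure, Nat.cast_ofNat]
    rw [hIcc']
    nlinarith [hI1le, hI2nn]
  · simp only [measure_empty, ENNReal.toReal_zero, Measure.restrict_empty,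
      integral_zero_measure, Nat.cast_ofNat]
    rw [hIcc']
    nlinarith [hI1nn, hI2le, hA, hBC', hsum']
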